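/- arXiv:2001.09316 — 2 statements merged into one kernel-verified Lean document; each statement's English description precedes it below -/
import Mathlib

section
/- Let K : ℝ → (ℤ → ℝ) be the kernel K(x)_n = 2^{-n} χ_{(-2^n,0)}(x) − 2^{-(n-1)} χ_{(-2^{n-1},0)}(x), and fix 2 ≤ s < ∞ and 1 ≤ r < ∞. Then there is a constant C > 0 such that for all x > 0 and all integers l ≥ 2, letting S_l(x) = (2^l x, 2^{l+1} x), one has (∫_{S_l(x)} ‖K(x−y) − K(−y)‖_{ℓ^s}^r dy)^{1/r} ≤ C · 2^{−l/r} · |S_l(x)|^{−1/r'}, where 1/r + 1/r' = 1. In particular K satisfies the D_r condition with summable coefficients c_l = C 2^{−l/r}. -/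
open MeasureTheory Set Real

/-- Indicator function of the open interval (a, b). -/
noncomputable def chi (a b : ℝ) : ℝ → ℝ := Set.indicator (Set.Ioo a b) (fun _ => 1)

/-- The sequence-valued kernel. -/
noncomputable def Kker (n : ℤ) (x : ℝ) : ℝ :=
  (2:ℝ)^(-n) * chi (-(2:ℝ)^n) 0 x - (2:ℝ)^(-(n-1)) * chi (-(2:ℝ)^(n-1)) 0 x

/-- The `ℓ^s` norm of a sequence indexed by `ℤ`. -/
noncomputable def lnorms (s : ℝ) (a : ℤ → ℝ) : ℝ := (∑' n : ℤ, |a n| ^ s) ^ (1/s)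

lemma lnorms_nonneg (s : ℝ) (a : ℤ → ℝ) : 0 ≤ lnorms s a :=
  Real.rpow_nonneg (tsum_nonneg fun n => Real.rpow_nonneg (abs_nonneg _) _) _

lemma chi_neg_eval (c t : ℝ) (ht : t < 0) : chi (-c) 0 t = if -t < c then 1 else 0 := by
  simp only [chi, Set.indicator_apply, Set.mem_Ioo]
  by_cases h : -t < c
  · rw [if_pos ⟨by linarith, ht⟩, if_pos h]
  · rw [if_neg, if_neg h]
    rintro ⟨h1, -⟩; exact h (by linarith)

/-- Pointwise decomposition of the kernel difference. -/
lemma Kker_diff (x y : ℝ) (hx : 0 < x) (hxy : x < y) (n : ℤ) :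
    Kker n (x - y) - Kker n (-y) =
      (2:ℝ)^(-n) * ((if y - x < (2:ℝ)^n then (1:ℝ) else 0) - (if y < (2:ℝ)^n then 1 else 0))
      - (2:ℝ)^(-(n-1)) * ((if y - x < (2:ℝ)^(n-1) then (1:ℝ) else 0)
          - (if y < (2:ℝ)^(n-1) then 1 else 0)) := by
  have h1 : x - y < 0 := by linarith
  have h2 : -y < 0 := by linarith
  have e1 := chi_neg_eval ((2:ℝ)^n) (x - y) h1
  have e2 := chi_neg_eval ((2:ℝ)^(n-1)) (x - y) h1
  have e3 := chi_neg_eval ((2:ℝ)^n) (-y) h2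
  have e4 := chi_neg_eval ((2:ℝ)^(n-1)) (-y) h2
  simp only [neg_sub, neg_neg] at e1 e2 e3 e4
  simp only [Kker, e1, e2, e3, e4]
  ring

lemma d_eval (x y : ℝ) (m k : ℤ) (hx : 0 < x) (h4 : 4 * x ≤ y)
    (hm1 : (2:ℝ)^m ≤ y) (hm2 : y < (2:ℝ)^(m+1)) :
    ((if y - x < (2:ℝ)^k then (1:ℝ) else 0) - (if y < (2:ℝ)^k then 1 else 0)) =
      if (k = m ∧ y - x < (2:ℝ)^m) then 1 else 0 := by
  rcases lt_or_ge y ((2:ℝ)^k) with h | h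
  · have hk' : y - x < (2:ℝ)^k := by linarith
    have hkm : ¬(k = m ∧ y - x < (2:ℝ)^m) := by rintro ⟨rfl, -⟩; linarith
    rw [if_pos hk', if_pos h, if_neg hkm]; ring
  · rcases lt_or_ge (y - x) ((2:ℝ)^k) with h2 | h2
    · have hkm : k = m := by
        have hlt : (2:ℝ)^k < (2:ℝ)^(m+1) := lt_of_le_of_lt h hm2
        have hk1 : k < m + 1 := (zpow_lt_zpow_iff_right₀ (by norm_num : (1:ℝ) < 2)).1 hlt
        have hgt : (2:ℝ)^(m-1) < (2:ℝ)^k := by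
          have hm0 : (0:ℝ) < (2:ℝ)^m := zpow_pos (by norm_num) m
          have he : (2:ℝ)^(m-1) = (2:ℝ)^m / 2 := by
            rw [zpow_sub₀ (by norm_num : (2:ℝ) ≠ 0), zpow_one]
          rw [he]; linarith
        have hk2 : m - 1 < k := (zpow_lt_zpow_iff_right₀ (by norm_num : (1:ℝ) < 2)).1 hgt
        omega
      subst hkm
      rw [if_pos h2, if_neg (not_lt.2 h), if_pos ⟨rfl, h2⟩]; ring
    · have hkm : ¬(k = m ∧ y - x < (2:ℝ)^m) := by rintro ⟨rfl, hb⟩; linarith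
      rw [if_neg (not_lt.2 (le_trans h2 (by linarith))), if_neg (not_lt.2 h), if_neg hkm]
      ring

/-- The kernel `K` satisfies the `D_r` condition, with the explicit coefficients
`c_l = C·2^{-l/r}` (which are summable).  Here `r'` is the conjugate exponent of `r`
(with the convention `r' = 0`, so `1/r' = 0`, when `r = 1`), and
`|S_l(x)| = 2^{l+1}x - 2^l x = 2^l x`. -/
theorem stmt3 (s r r' : ℝ) (hs : 2 ≤ s) (hr : 1 ≤ r) (hrr' : 1/r + 1/r' = 1) :
    ∃ C > 0, ∀ x : ℝ, 0 < x → ∀ l : ℤ, 2 ≤ l →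
      (∫ y in Set.Ioo ((2:ℝ)^l * x) ((2:ℝ)^(l+1) * x),
          lnorms s (fun n => Kker n (x - y) - Kker n (-y)) ^ r) ^ (1/r)
        ≤ C * (2:ℝ) ^ (-(l:ℝ)/r) * ((2:ℝ)^l * x) ^ (-(1/r')) := by
  have hr0 : (0:ℝ) < r := by linarith
  have hs0 : (0:ℝ) < s := by linarith
  refine ⟨8, by norm_num, ?_⟩
  intro x hx l hl
  set A : ℝ := (2:ℝ)^l * x with hA
  have h2l : (4:ℝ) ≤ (2:ℝ)^l := by
    calc (4:ℝ) = (2:ℝ)^(2:ℤ) := by norm_num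
    _ ≤ (2:ℝ)^l := zpow_le_zpow_right₀ (by norm_num) hl
  have hA0 : 0 < A := mul_pos (zpow_pos (by norm_num) l) hx
  set m1 := Int.log 2 A with hm1def
  have hm1a : (2:ℝ)^m1 ≤ A := by
    have h := Int.zpow_log_le_self (b := 2) (by norm_num) hA0
    norm_num at h; exact h
  have hm1b : A < (2:ℝ)^(m1+1) := by
    have h := Int.lt_zpow_succ_log_self (b := 2) (by norm_num) A
    norm_num at h; exact h
  set B' : Set ℝ := Ico ((2:ℝ)^m1) ((2:ℝ)^m1 + x) ∪ Ico ((2:ℝ)^(m1+1)) ((2:ℝ)^(m1+1) + x)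
    with hB'def
  set M : ℝ := 4 / A with hM
  have hM0 : 0 < M := by positivity
  -- pointwise bound
  have key : ∀ y ∈ Set.Ioo A ((2:ℝ)^(l+1) * x),
      lnorms s (fun n => Kker n (x - y) - Kker n (-y)) ^ r
        ≤ B'.indicator (fun _ => M ^ r) y := by
    rintro y ⟨hy1, hy2⟩
    have hy0 : 0 < y := lt_trans hA0 hy1
    have h4 : 4 * x ≤ y := by
      have : 4 * x ≤ A := by rw [hA]; nlinarith
      linarith
    have hxy : x < y := by linarith
    set m := Int.log 2 y with hmdef
    have hm1 : (2:ℝ)^m ≤ y := by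
      have h := Int.zpow_log_le_self (b := 2) (by norm_num) hy0
      norm_num at h; exact h
    have hm2 : y < (2:ℝ)^(m+1) := by
      have h := Int.lt_zpow_succ_log_self (b := 2) (by norm_num) y
      norm_num at h; exact h
    have ha : ∀ n : ℤ, Kker n (x - y) - Kker n (-y) =
        (2:ℝ)^(-n) * (if (n = m ∧ y - x < (2:ℝ)^m) then (1:ℝ) else 0)
        - (2:ℝ)^(-(n-1)) * (if (n-1 = m ∧ y - x < (2:ℝ)^m) then (1:ℝ) else 0) := by
      intro n
      rw [Kker_diff x y hx hxy n, d_eval x y m n hx h4 hm1 hm2,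
        d_eval x y m (n-1) hx h4 hm1 hm2]
    by_cases hbad : y - x < (2:ℝ)^m
    · -- nonzero case
      set c : ℝ := (2:ℝ)^(-m) with hc
      have hc0 : 0 < c := zpow_pos (by norm_num) _
      have ha' : ∀ n : ℤ, Kker n (x - y) - Kker n (-y) =
          if n = m then c else if n = m+1 then -c else 0 := by
        intro n
        rw [ha n]
        by_cases h1 : n = m
        · subst h1
          rw [if_pos ⟨rfl, hbad⟩, if_neg (by rintro ⟨h, -⟩; omega), if_pos rfl]
          ring
        · by_cases h2 : n = m + 1
          · subst h2
            rw [if_neg (by rintro ⟨h, -⟩; omega),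
              if_pos (show (m+1-1 = m ∧ y - x < (2:ℝ)^m) from ⟨by ring, hbad⟩),
              if_neg h1, if_pos rfl]
            have he : -(m+1-1) = -m := by ring
            rw [he]; ring
          · rw [if_neg (by rintro ⟨h, -⟩; exact h1 h),
              if_neg (by rintro ⟨h, -⟩; exact h2 (by omega)), if_neg h1, if_neg h2]
            ring
      have habs : ∀ n : ℤ, |Kker n (x - y) - Kker n (-y)| ^ s =
          if n = m ∨ n = m+1 then c ^ s else 0 := by
        intro n
        rw [ha' n]
        by_cases h1 : n = m
        · simp [h1, abs_of_pos hc0]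
        · by_cases h2 : n = m+1
          · simp [h1, h2, abs_neg, abs_of_pos hc0]
          · simp [h1, h2, Real.zero_rpow (ne_of_gt hs0)]
      have htsum : ∑' n : ℤ, |Kker n (x - y) - Kker n (-y)| ^ s = 2 * c ^ s := by
        rw [tsum_eq_sum (s := ({m, m+1} : Finset ℤ))
          (fun b hb => by
            simp only [Finset.mem_insert, Finset.mem_singleton] at hb
            rw [habs b, if_neg hb])]
        rw [Finset.sum_pair (by omega : m ≠ m+1), habs m, habs (m+1)]
        rw [if_pos (Or.inl rfl), if_pos (Or.inr rfl)]
        ring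
      have hln : lnorms s (fun n => Kker n (x - y) - Kker n (-y)) = 2^(1/s) * c := by
        simp only [lnorms]
        rw [htsum, Real.mul_rpow (by norm_num) (Real.rpow_nonneg hc0.le s),
          ← Real.rpow_mul hc0.le, mul_one_div_cancel (ne_of_gt hs0), Real.rpow_one]
      have hcy : c ≤ 2 / y := by
        have hm0 : (0:ℝ) < (2:ℝ)^m := zpow_pos (by norm_num) m
        have h2m : y ≤ 2 * (2:ℝ)^m := by
          have he : (2:ℝ)^(m+1) = 2 * (2:ℝ)^m := by
            rw [zpow_add_one₀ (by norm_num : (2:ℝ) ≠ 0)]; ring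
          linarith [hm2]
        rw [show c = ((2:ℝ)^m)⁻¹ from by rw [hc, zpow_neg], le_div_iff₀ hy0]
        calc ((2:ℝ)^m)⁻¹ * y ≤ ((2:ℝ)^m)⁻¹ * (2 * (2:ℝ)^m) := by
              exact mul_le_mul_of_nonneg_left h2m (inv_nonneg.2 hm0.le)
        _ = 2 := by field_simp
      have h2s : (2:ℝ)^(1/s) ≤ 2 := by
        calc (2:ℝ)^(1/s) ≤ (2:ℝ)^(1:ℝ) :=
              Real.rpow_le_rpow_of_exponent_le (by norm_num) ((div_le_one hs0).2 (by linarith))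
        _ = 2 := Real.rpow_one 2
      have hlb : lnorms s (fun n => Kker n (x - y) - Kker n (-y)) ≤ M := by
        rw [hln, hM]
        calc (2:ℝ)^(1/s) * c ≤ 2 * (2/y) :=
              mul_le_mul h2s hcy hc0.le (by norm_num)
        _ = 4 / y := by ring
        _ ≤ 4 / A := by gcongr
      have hmm1 : m1 ≤ m := by
        have : (2:ℝ)^m1 < (2:ℝ)^(m+1) := lt_of_le_of_lt hm1a (lt_trans hy1 hm2)
        have := (zpow_lt_zpow_iff_right₀ (by norm_num : (1:ℝ) < 2)).1 this
        omega
      have hmm2 : m ≤ m1 + 1 := by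
        have he2 : (2:ℝ)^(l+1) * x = 2 * A := by
          rw [hA, zpow_add_one₀ (by norm_num : (2:ℝ) ≠ 0)]; ring
        have he3 : (2:ℝ)^(m1+2) = 2 * (2:ℝ)^(m1+1) := by
          rw [show m1+2 = (m1+1)+1 by ring, zpow_add_one₀ (by norm_num : (2:ℝ) ≠ 0)]; ring
        have : (2:ℝ)^m < (2:ℝ)^(m1+2) := by
          calc (2:ℝ)^m ≤ y := hm1
          _ < (2:ℝ)^(l+1) * x := hy2
          _ = 2 * A := he2
          _ < 2 * (2:ℝ)^(m1+1) := by linarith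
          _ = (2:ℝ)^(m1+2) := he3.symm
        have := (zpow_lt_zpow_iff_right₀ (by norm_num : (1:ℝ) < 2)).1 this
        omega
      have hyB : y ∈ B' := by
        have hy4 : y < (2:ℝ)^m + x := by linarith
        rcases (by omega : m = m1 ∨ m = m1 + 1) with h | h
        · exact Or.inl ⟨by rw [← h]; exact hm1, by rw [← h]; exact hy4⟩
        · exact Or.inr ⟨by rw [← h]; exact hm1, by rw [← h]; exact hy4⟩
      rw [Set.indicator_of_mem hyB]
      exact Real.rpow_le_rpow (lnorms_nonneg _ _) hlb hr0.le
    · -- zero case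
      have ha0 : ∀ n : ℤ, Kker n (x - y) - Kker n (-y) = 0 := by
        intro n
        rw [ha n, if_neg (by rintro ⟨-, hb⟩; exact hbad hb),
          if_neg (by rintro ⟨-, hb⟩; exact hbad hb)]
        ring
      have hz : lnorms s (fun n => Kker n (x - y) - Kker n (-y)) = 0 := by
        simp only [lnorms, ha0, abs_zero, Real.zero_rpow (ne_of_gt hs0), tsum_zero]
        exact Real.zero_rpow (one_div_ne_zero (ne_of_gt hs0))
      rw [hz, Real.zero_rpow (ne_of_gt hr0)]
      exact Set.indicator_nonneg (fun _ _ => Real.rpow_nonneg hM0.le r) y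
  -- integral bound
  set S : Set ℝ := Set.Ioo A ((2:ℝ)^(l+1) * x) with hSdef
  have hS : MeasurableSet S := measurableSet_Ioo
  have hB' : MeasurableSet B' := measurableSet_Ico.union measurableSet_Ico
  have hgint : IntegrableOn (B'.indicator fun _ => M ^ r) S volume :=
    (integrableOn_const measure_Ioo_lt_top.ne enorm_ne_top).indicator hB'
  have hint : (∫ y in S, lnorms s (fun n => Kker n (x - y) - Kker n (-y)) ^ r)
      ≤ ∫ y in S, B'.indicator (fun _ => M ^ r) y :=
    integral_mono_of_nonneg
      (Filter.Eventually.of_forall fun y => Real.rpow_nonneg (lnorms_nonneg _ _) r)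
      hgint ((ae_restrict_iff' hS).2 (Filter.Eventually.of_forall key))
  have hval : (∫ y in S, B'.indicator (fun _ => M ^ r) y)
      = (volume (S ∩ B')).toReal * M ^ r := by
    rw [setIntegral_indicator hB', setIntegral_const, smul_eq_mul]
    rfl
  have hvol : (volume (S ∩ B')).toReal ≤ 2 * x := by
    apply ENNReal.toReal_le_of_le_ofReal (by positivity)
    calc volume (S ∩ B') ≤ volume B' := measure_mono inter_subset_right
    _ ≤ volume (Ico ((2:ℝ)^m1) ((2:ℝ)^m1 + x))
        + volume (Ico ((2:ℝ)^(m1+1)) ((2:ℝ)^(m1+1) + x)) := measure_union_le _ _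
    _ = ENNReal.ofReal (2 * x) := by
        rw [Real.volume_Ico, Real.volume_Ico,
          ← ENNReal.ofReal_add (by linarith) (by linarith)]
        ring_nf
  have hIb : (∫ y in S, lnorms s (fun n => Kker n (x - y) - Kker n (-y)) ^ r)
      ≤ M ^ r * (2 * x) := by
    calc (∫ y in S, lnorms s (fun n => Kker n (x - y) - Kker n (-y)) ^ r)
        ≤ (volume (S ∩ B')).toReal * M ^ r := hint.trans hval.le
    _ ≤ (2 * x) * M ^ r :=
        mul_le_mul_of_nonneg_right hvol (Real.rpow_nonneg hM0.le r)
    _ = M ^ r * (2 * x) := by ring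
  have hL : (∫ y in S, lnorms s (fun n => Kker n (x - y) - Kker n (-y)) ^ r) ^ (1/r)
      ≤ (M ^ r * (2 * x)) ^ (1/r) :=
    Real.rpow_le_rpow
      (integral_nonneg fun y => Real.rpow_nonneg (lnorms_nonneg _ _) r) hIb (by positivity)
  have hEq : (M ^ r * (2 * x)) ^ (1/r) = M * (2 * x) ^ (1/r) := by
    rw [Real.mul_rpow (Real.rpow_nonneg hM0.le r) (by linarith),
      ← Real.rpow_mul hM0.le, mul_one_div_cancel (ne_of_gt hr0), Real.rpow_one]
  have hr'e : -(1/r') = 1/r - 1 := by linarith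
  have hAr : A ^ (-(1/r')) = A ^ (1/r) / A := by
    rw [hr'e, Real.rpow_sub hA0, Real.rpow_one]
  have hAr2 : A ^ (1/r) = (2:ℝ)^((l:ℝ)/r) * x ^ (1/r) := by
    rw [hA, Real.mul_rpow (by positivity) hx.le]
    congr 1
    rw [← Real.rpow_intCast 2 l, ← Real.rpow_mul (by norm_num)]
    congr 1; ring
  have h2cancel : (2:ℝ)^(-(l:ℝ)/r) * (2:ℝ)^((l:ℝ)/r) = 1 := by
    rw [← Real.rpow_add (by norm_num : (0:ℝ) < 2),
      show -(l:ℝ)/r + (l:ℝ)/r = 0 by ring, Real.rpow_zero]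
  have h2r : (2:ℝ)^(1/r) ≤ 2 := by
    calc (2:ℝ)^(1/r) ≤ (2:ℝ)^(1:ℝ) :=
          Real.rpow_le_rpow_of_exponent_le (by norm_num) ((div_le_one hr0).2 hr)
    _ = 2 := Real.rpow_one 2
  calc (∫ y in S, lnorms s (fun n => Kker n (x - y) - Kker n (-y)) ^ r) ^ (1/r)
      ≤ M * (2 * x) ^ (1/r) := hEq ▸ hL
  _ = 4 / A * ((2:ℝ)^(1/r) * x ^ (1/r)) := by
      rw [hM, Real.mul_rpow (by norm_num) hx.le]
  _ ≤ 4 / A * (2 * x ^ (1/r)) := by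
      gcongr
  _ = 8 * x ^ (1/r) / A := by ring
  _ = 8 * (2:ℝ)^(-(l:ℝ)/r) * A ^ (-(1/r')) := by
      rw [hAr, hAr2,
        show (8:ℝ) * (2:ℝ)^(-(l:ℝ)/r) * ((2:ℝ)^((l:ℝ)/r) * x ^ (1/r) / A)
          = 8 * ((2:ℝ)^(-(l:ℝ)/r) * (2:ℝ)^((l:ℝ)/r)) * x ^ (1/r) / A from by ring,
        h2cancel]
      ring
end

section
/- Let K : ℝ → (ℤ → ℝ) be the kernel K(x)_n = 2^{-n} χ_{(-2^n,0)}(x) − 2^{-(n-1)} χ_{(-2^{n-1},0)}(x), and fix 2 ≤ s < ∞. Then K satisfies the Hörmander condition: there is a constant C > 0 such that for all x > 0, ∫_{{y : y > 4x}} ‖K(x−y) − K(−y)‖_{ℓ^s} dy ≤ C. -/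
open MeasureTheory Set Real

lemma two_zpow_pos (n : ℤ) : (0:ℝ) < 2 ^ n := zpow_pos (by norm_num) n

lemma zpow_mono {m n : ℤ} (h : m ≤ n) : (2:ℝ)^m ≤ 2^n :=
  zpow_le_zpow_right₀ one_le_two h

lemma half_pow {n0 n : ℤ} (h : n0 ≤ n) :
    (2:ℝ)^(-n) = 2^(-n0) * (1/2:ℝ)^(n - n0).toNat := by
  have h1 : ((n - n0).toNat : ℤ) = n - n0 := Int.toNat_of_nonneg (by omega)
  have h2 : (1/2:ℝ)^(n - n0).toNat = (2:ℝ)^(-(n - n0)) := by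
    rw [← zpow_natCast ((1/2:ℝ)) _, h1, one_div, inv_zpow, ← zpow_neg]
  rw [h2, ← zpow_add₀ (two_ne_zero : (2:ℝ) ≠ 0)]
  congr 1
  ring

lemma half_pow' {n0 n : ℤ} (h : n0 ≤ n) :
    (2:ℝ)^(1-n) = 2^(1-n0) * (1/2:ℝ)^(n - n0).toNat := by
  have e1 : (1:ℤ) - n = 1 + -n := by ring
  have e2 : (1:ℤ) - n0 = 1 + -n0 := by ring
  rw [e1, e2, zpow_add₀ (two_ne_zero : (2:ℝ) ≠ 0), zpow_add₀ (two_ne_zero : (2:ℝ) ≠ 0),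
    half_pow h]
  ring

lemma tail_lemma (C q : ℝ) (hq0 : 0 ≤ q) (hq1 : q < 1) (n0 : ℤ) :
    Summable (fun n : ℤ => if n0 ≤ n then C * q ^ (n - n0).toNat else 0) ∧
    (∑' n : ℤ, (if n0 ≤ n then C * q ^ (n - n0).toNat else 0)) = C * (1 - q)⁻¹ := by
  set i : ℕ → ℤ := fun m => n0 + (m : ℤ) with hi
  have hinj : Function.Injective i := by intro a b hab; simpa [i] using hab
  have hsupp : ∀ n, n ∉ Set.range i →
      (if n0 ≤ n then C * q ^ (n - n0).toNat else 0) = 0 := by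
    intro n hn
    rw [if_neg]
    intro hle
    exact hn ⟨(n - n0).toNat, by simp only [i]; omega⟩
  have hcomp : ∀ m : ℕ, (if n0 ≤ i m then C * q ^ (i m - n0).toNat else 0) = C * q ^ m := by
    intro m
    rw [if_pos (by simp only [i]; omega)]
    congr 2
    simp [i]
  have hgeom : Summable (fun m : ℕ => C * q ^ m) :=
    (summable_geometric_of_lt_one hq0 hq1).mul_left C
  have hsum : Summable (fun n : ℤ => if n0 ≤ n then C * q ^ (n - n0).toNat else 0) := by
    rw [← hinj.summable_iff hsupp]
    exact hgeom.congr fun m => (hcomp m).symm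
  refine ⟨hsum, ?_⟩
  have hsupp' : Function.support (fun n : ℤ => if n0 ≤ n then C * q ^ (n - n0).toNat else 0)
      ⊆ Set.range i := by
    intro n hn
    by_contra hc
    exact hn (hsupp n hc)
  rw [← hinj.tsum_eq hsupp']
  rw [tsum_congr hcomp, tsum_mul_left, tsum_geometric_of_lt_one hq0 hq1]

lemma chi_neg (a v : ℝ) (hv : 0 < v) : chi (-a) 0 (-v) = if v < a then 1 else 0 := by
  unfold chi
  rw [Set.indicator_apply]
  by_cases h : v < a
  · rw [if_pos (by constructor <;> simp <;> linarith), if_pos h]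
  · rw [if_neg (by simp only [Set.mem_Ioo]; push_neg; intro hc; exfalso; exact h (by linarith)),
      if_neg h]

lemma Kker_neg (n : ℤ) (v : ℝ) (hv : 0 < v) :
    Kker n (-v) = 2^(-n) * (if v < 2^n then (1:ℝ) else 0)
      - 2^(-(n-1)) * (if v < 2^(n-1) then (1:ℝ) else 0) := by
  unfold Kker
  rw [chi_neg _ _ hv, chi_neg _ _ hv]

lemma exp_neg_sub (n : ℤ) : (2:ℝ)^(-(n-1)) = 2 * 2^(-n) := by
  rw [show -(n-1) = 1 + -n by ring, zpow_add₀ (two_ne_zero : (2:ℝ) ≠ 0), zpow_one]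

lemma Kker_abs (n : ℤ) (v : ℝ) (hv : 0 < v) : |Kker n (-v)| ≤ 2^(-n) := by
  rw [Kker_neg n v hv, exp_neg_sub n, abs_le]
  have hp := two_zpow_pos (-n)
  have hm := zpow_mono (show n - 1 ≤ n by omega)
  split_ifs with h1 h2 h3
  · constructor <;> nlinarith
  · constructor <;> nlinarith
  · exfalso; linarith
  · constructor <;> nlinarith

lemma Kker_zero (n : ℤ) (v : ℝ) (hv0 : 0 < v) (hv : (2:ℝ)^n ≤ v) : Kker n (-v) = 0 := by
  have hm := zpow_mono (show n - 1 ≤ n by omega)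
  rw [Kker_neg n v hv0, if_neg (by linarith), if_neg (by linarith)]
  ring

lemma n0_iff (u : ℝ) (hu : 0 < u) (n : ℤ) : u < 2^n ↔ Int.log 2 u + 1 ≤ n := by
  constructor
  · intro h
    by_contra hc
    push_neg at hc
    have h1 : (2:ℝ)^n ≤ 2^(Int.log 2 u) := zpow_mono (by omega)
    have h2 : ((2:ℕ):ℝ)^(Int.log 2 u) ≤ u := Int.zpow_log_le_self (by norm_num) hu
    push_cast at h2
    linarith
  · intro h
    have h2 : u < ((2:ℕ):ℝ)^(Int.log 2 u + 1) := Int.lt_zpow_succ_log_self (by norm_num) u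
    push_cast at h2
    exact h2.trans_le (zpow_mono h)

lemma lnorms_le (s : ℝ) (hs : 2 ≤ s) (x y : ℝ) (hx : 0 < x) (hy : x < y) :
    lnorms s (fun n => Kker n (x - y) - Kker n (-y)) ≤ 4 / (y - x) := by
  have hs0 : 0 < s := by linarith
  set u := y - x with hu
  have hu0 : 0 < u := by rw [hu]; linarith
  have hy0 : 0 < y := by linarith
  set n0 : ℤ := Int.log 2 u + 1 with hn0
  have hiff : ∀ n : ℤ, u < 2^n ↔ n0 ≤ n := fun n => n0_iff u hu0 n
  set q : ℝ := (1/2:ℝ)^s with hq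
  have hq0 : 0 ≤ q := Real.rpow_nonneg (by norm_num) s
  have hq14 : q ≤ 1/4 := by
    calc q ≤ (1/2:ℝ)^(2:ℝ) := Real.rpow_le_rpow_of_exponent_ge (by norm_num) (by norm_num) hs
    _ = 1/4 := by
        rw [show (2:ℝ) = ((2:ℕ):ℝ) by norm_num, Real.rpow_natCast]; norm_num
  have hq1 : q < 1 := by linarith
  set Cs : ℝ := ((2:ℝ)^(1-n0))^s with hCs
  have hCs0 : 0 ≤ Cs := Real.rpow_nonneg (two_zpow_pos _).le s
  set M : ℤ → ℝ := fun n => if n0 ≤ n then Cs * q ^ (n - n0).toNat else 0 with hM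
  have hMsum : Summable M := (tail_lemma Cs q hq0 hq1 n0).1
  have hxy : x - y = -u := by rw [hu]; ring
  have hDM : ∀ n : ℤ, |Kker n (x - y) - Kker n (-y)| ^ s ≤ M n := by
    intro n
    by_cases hn : n0 ≤ n
    · have h1 : |Kker n (-u)| ≤ 2^(-n) := Kker_abs n u hu0
      have h2 : |Kker n (-y)| ≤ 2^(-n) := Kker_abs n y hy0
      have hD : |Kker n (x - y) - Kker n (-y)| ≤ 2^(1-n) := by
        rw [hxy]
        have he : (2:ℝ)^((1:ℤ)-n) = 2^(-n) + 2^(-n) := by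
          rw [show (1:ℤ)-n = 1 + -n by ring, zpow_add₀ (two_ne_zero : (2:ℝ) ≠ 0), zpow_one]
          ring
        calc |Kker n (-u) - Kker n (-y)| ≤ |Kker n (-u)| + |Kker n (-y)| := abs_sub _ _
          _ ≤ 2^(1-n) := by rw [he]; exact add_le_add h1 h2
      have hMn : M n = ((2:ℝ)^((1:ℤ)-n))^s := by
        simp only [hM, if_pos hn]
        rw [half_pow' hn, Real.mul_rpow (two_zpow_pos _).le (by positivity)]
        congr 1
        rw [← Real.rpow_natCast ((1/2:ℝ)) ((n-n0).toNat), ← Real.rpow_natCast q ((n-n0).toNat),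
          hq, ← Real.rpow_mul (by norm_num : (0:ℝ) ≤ 1/2),
          ← Real.rpow_mul (by norm_num : (0:ℝ) ≤ 1/2), mul_comm]
      rw [hMn]
      exact Real.rpow_le_rpow (abs_nonneg _) hD hs0.le
    · have h2n : (2:ℝ)^n ≤ u := by
        by_contra hc
        push_neg at hc
        exact hn ((hiff n).mp hc)
      have hz1 : Kker n (x - y) = 0 := by rw [hxy]; exact Kker_zero n u hu0 h2n
      have hz2 : Kker n (-y) = 0 := Kker_zero n y hy0 (by linarith)
      rw [hz1, hz2, sub_zero, abs_zero, Real.zero_rpow hs0.ne']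
      simp [hM, hn]
  have hDsum : Summable (fun n : ℤ => |Kker n (x - y) - Kker n (-y)| ^ s) :=
    Summable.of_nonneg_of_le (fun n => Real.rpow_nonneg (abs_nonneg _) s) hDM hMsum
  have hsum_le : (∑' n : ℤ, |Kker n (x - y) - Kker n (-y)| ^ s) ≤ Cs * (1 - q)⁻¹ := by
    rw [← (tail_lemma Cs q hq0 hq1 n0).2]
    exact Summable.tsum_le_tsum hDM hDsum hMsum
  unfold lnorms
  have h1s : 0 < 1/s := by positivity
  have hinv : (1-q)⁻¹ ≤ 4/3 := by
    rw [inv_le_comm₀ (by linarith) (by norm_num)]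
    linarith
  calc (∑' n : ℤ, |Kker n (x - y) - Kker n (-y)| ^ s)^(1/s)
      ≤ (Cs * (4/3:ℝ))^(1/s) := by
        apply Real.rpow_le_rpow (tsum_nonneg fun n => Real.rpow_nonneg (abs_nonneg _) s) _ h1s.le
        calc (∑' n : ℤ, |Kker n (x - y) - Kker n (-y)| ^ s) ≤ Cs * (1-q)⁻¹ := hsum_le
        _ ≤ Cs * (4/3) := mul_le_mul_of_nonneg_left hinv hCs0
    _ = Cs^(1/s) * (4/3:ℝ)^(1/s) := Real.mul_rpow hCs0 (by norm_num)
    _ = 2^(1-n0) * (4/3:ℝ)^(1/s) := by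
        congr 1
        rw [hCs, ← Real.rpow_mul (two_zpow_pos _).le, mul_one_div, div_self hs0.ne',
          Real.rpow_one]
    _ ≤ 2^(1-n0) * (4/3) := by
        apply mul_le_mul_of_nonneg_left _ (two_zpow_pos _).le
        calc (4/3:ℝ)^(1/s) ≤ (4/3:ℝ)^(1:ℝ) :=
              Real.rpow_le_rpow_of_exponent_le (by norm_num)
                (by rw [div_le_one hs0]; linarith)
        _ = 4/3 := Real.rpow_one _
    _ ≤ 4 / u := by
        have hlt : u < 2^n0 := (hiff n0).mpr le_rfl
        have e : (2:ℝ)^((1:ℤ)-n0) = 2 / 2^n0 := by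
          rw [show (1:ℤ)-n0 = 1 + -n0 by ring, zpow_add₀ (two_ne_zero : (2:ℝ) ≠ 0), zpow_one,
            zpow_neg]
          ring
        rw [e]
        rw [div_mul_eq_mul_div, div_le_div_iff₀ (two_zpow_pos _) hu0]
        nlinarith [two_zpow_pos n0]


lemma lnorms_eq_zero (s : ℝ) (hs0 : s ≠ 0) (x y : ℝ) (hx : 0 < x) (hy : x < y)
    (h : ∀ k : ℤ, ¬((2:ℝ)^k ≤ y ∧ y < 2^k + x)) :
    lnorms s (fun n => Kker n (x - y) - Kker n (-y)) = 0 := by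
  have hiff : ∀ k : ℤ, (y - x < 2^k ↔ y < 2^k) := by
    intro k
    constructor
    · intro hk
      by_contra hc
      push_neg at hc
      exact h k ⟨hc, by linarith⟩
    · intro hk; linarith
  have hD : ∀ n : ℤ, Kker n (x - y) = Kker n (-y) := by
    intro n
    have hxy : x - y = -(y - x) := by ring
    rw [hxy, Kker_neg n _ (by linarith), Kker_neg n y (by linarith)]
    rw [if_congr (hiff n) rfl rfl, if_congr (hiff (n-1)) rfl rfl]
  unfold lnorms
  have hz : (fun n : ℤ => |Kker n (x - y) - Kker n (-y)| ^ s) = fun _ => (0:ℝ) := by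
    funext n
    rw [hD n, sub_self, abs_zero, Real.zero_rpow hs0]
  rw [hz, tsum_zero, Real.zero_rpow (one_div_ne_zero hs0)]

lemma meas_Kker (n : ℤ) : Measurable (Kker n) := by
  unfold Kker chi
  exact ((measurable_const.indicator measurableSet_Ioo).const_mul _).sub
    ((measurable_const.indicator measurableSet_Ioo).const_mul _)

lemma meas_f (s : ℝ) (hs0 : 0 < s) (x : ℝ) :
    Measurable (fun y => lnorms s (fun n => Kker n (x - y) - Kker n (-y))) := by
  unfold lnorms
  apply Measurable.comp (Real.continuous_rpow_const (by positivity : (0:ℝ) ≤ 1/s)).measurable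
  have key : (fun y => ∑' n : ℤ, |Kker n (x - y) - Kker n (-y)| ^ s)
      = fun y => (∑' n : ℤ, ENNReal.ofReal (|Kker n (x - y) - Kker n (-y)| ^ s)).toReal := by
    funext y
    rw [ENNReal.tsum_toReal_eq (fun n => ENNReal.ofReal_ne_top)]
    exact tsum_congr fun n =>
      (ENNReal.toReal_ofReal (Real.rpow_nonneg (abs_nonneg _) s)).symm
  rw [key]
  apply ENNReal.measurable_toReal.comp
  apply Measurable.ennreal_tsum
  intro n
  apply ENNReal.measurable_ofReal.comp
  apply Measurable.comp (Real.continuous_rpow_const hs0.le).measurable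
  exact (((meas_Kker n).comp (measurable_const.sub measurable_id)).sub
    ((meas_Kker n).comp measurable_neg)).abs

/-- The kernel `K` satisfies the Hörmander condition. -/
theorem stmt4 (s : ℝ) (hs : 2 ≤ s) :
    ∃ C > 0, ∀ x : ℝ, 0 < x →
      (∫ y in Set.Ioi (4 * x), lnorms s (fun n => Kker n (x - y) - Kker n (-y))) ≤ C := by
  refine ⟨4, by norm_num, ?_⟩
  intro x hx
  have hs0 : (0:ℝ) < s := by linarith
  set f : ℝ → ℝ := fun y => lnorms s (fun n => Kker n (x - y) - Kker n (-y)) with hfdef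
  have hfm : Measurable f := meas_f s hs0 x
  have hf0 : ∀ y, 0 ≤ f y := fun y =>
    Real.rpow_nonneg (tsum_nonneg fun n => Real.rpow_nonneg (abs_nonneg _) s) _
  rw [integral_eq_lintegral_of_nonneg_ae (ae_of_all _ hf0) hfm.aestronglyMeasurable]
  set k0 : ℤ := Int.log 2 (3*x) + 1 with hk0
  have hk0iff : ∀ k : ℤ, 3*x < 2^k ↔ k0 ≤ k := fun k => n0_iff (3*x) (by linarith) k
  set B : Set ℝ := ⋃ k : ℤ, Set.Ico ((2:ℝ)^k) (2^k + x) with hBdef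
  have hBm : MeasurableSet B := MeasurableSet.iUnion fun k => measurableSet_Ico
  set b : ℤ → ℝ := fun k => if k0 ≤ k then (6*x*2^(-k0)) * (1/2:ℝ)^(k - k0).toNat else 0
    with hbdef
  have hb0 : ∀ k, 0 ≤ b k := by
    intro k
    simp only [hbdef]
    split_ifs
    · positivity
    · exact le_rfl
  have key : (∫⁻ y in Set.Ioi (4*x), ENNReal.ofReal (f y)) ≤ ENNReal.ofReal 4 := by
    have step1 : (∫⁻ y in Set.Ioi (4*x), ENNReal.ofReal (f y))
        ≤ ∫⁻ y in Set.Ioi (4*x), B.indicator (fun y => ENNReal.ofReal (4/(y-x))) y := by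
      apply setLIntegral_mono
        ((ENNReal.measurable_ofReal.comp
          (measurable_const.div (measurable_id.sub measurable_const))).indicator hBm)
      intro y hy
      have hy4 : 4*x < y := hy
      by_cases hyB : y ∈ B
      · rw [Set.indicator_of_mem hyB]
        exact ENNReal.ofReal_le_ofReal (lnorms_le s hs x y hx (by linarith))
      · rw [Set.indicator_of_notMem hyB]
        have hz : f y = 0 := by
          apply lnorms_eq_zero s hs0.ne' x y hx (by linarith)
          intro k hk
          exact hyB (Set.mem_iUnion.mpr ⟨k, hk.1, hk.2⟩)
        rw [hz]
        simp
    have step2 : (∫⁻ y in Set.Ioi (4*x), B.indicator (fun y => ENNReal.ofReal (4/(y-x))) y)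
        = ∫⁻ y in B ∩ Set.Ioi (4*x), ENNReal.ofReal (4/(y-x)) := by
      rw [lintegral_indicator hBm, Measure.restrict_restrict hBm]
    have step3 : (∫⁻ y in B ∩ Set.Ioi (4*x), ENNReal.ofReal (4/(y-x)))
        ≤ ∑' k : ℤ, ∫⁻ y in Set.Ico ((2:ℝ)^k) (2^k + x) ∩ Set.Ioi (4*x),
            ENNReal.ofReal (4/(y-x)) := by
      rw [hBdef, Set.iUnion_inter]
      exact lintegral_iUnion_le _ _
    have step4 : ∀ k : ℤ, (∫⁻ y in Set.Ico ((2:ℝ)^k) (2^k + x) ∩ Set.Ioi (4*x),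
        ENNReal.ofReal (4/(y-x))) ≤ ENNReal.ofReal (b k) := by
      intro k
      by_cases hk : k0 ≤ k
      · have h3x : 3*x < 2^k := (hk0iff k).mpr hk
        have hptw : ∀ y ∈ Set.Ico ((2:ℝ)^k) (2^k + x) ∩ Set.Ioi (4*x),
            ENNReal.ofReal (4/(y-x)) ≤ ENNReal.ofReal (6 * 2^(-k)) := by
          rintro y ⟨⟨h1, h2⟩, h3⟩
          apply ENNReal.ofReal_le_ofReal
          have hpos : (0:ℝ) < (2/3) * 2^k := by positivity
          have hyx : (2/3) * 2^k ≤ y - x := by linarith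
          calc 4/(y-x) ≤ 4/((2/3)*2^k) := by gcongr
            _ = 6 * 2^(-k) := by
                rw [zpow_neg]
                field_simp
                ring
        calc (∫⁻ y in Set.Ico ((2:ℝ)^k) (2^k + x) ∩ Set.Ioi (4*x), ENNReal.ofReal (4/(y-x)))
            ≤ ∫⁻ _ in Set.Ico ((2:ℝ)^k) (2^k + x) ∩ Set.Ioi (4*x),
              ENNReal.ofReal (6 * 2^(-k)) := setLIntegral_mono measurable_const hptw
          _ = ENNReal.ofReal (6 * 2^(-k))
              * volume (Set.Ico ((2:ℝ)^k) (2^k + x) ∩ Set.Ioi (4*x)) := by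
              rw [setLIntegral_const]
          _ ≤ ENNReal.ofReal (6 * 2^(-k)) * ENNReal.ofReal x := by
              gcongr
              calc volume (Set.Ico ((2:ℝ)^k) (2^k + x) ∩ Set.Ioi (4*x))
                  ≤ volume (Set.Ico ((2:ℝ)^k) (2^k + x)) := measure_mono inter_subset_left
                _ = ENNReal.ofReal ((2^k + x) - 2^k) := Real.volume_Ico
                _ = ENNReal.ofReal x := by ring_nf
          _ = ENNReal.ofReal (6 * 2^(-k) * x) := (ENNReal.ofReal_mul (by positivity)).symm
          _ = ENNReal.ofReal (b k) := by
              congr 1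
              simp only [hbdef, if_pos hk]
              rw [half_pow hk]
              ring
      · have hempty : Set.Ico ((2:ℝ)^k) (2^k + x) ∩ Set.Ioi (4*x) = ∅ := by
          rw [Set.eq_empty_iff_forall_notMem]
          rintro y ⟨⟨h1, h2⟩, h3⟩
          have h3x : ¬ 3*x < 2^k := fun hc => hk ((hk0iff k).mp hc)
          push_neg at h3x
          simp only [Set.mem_Ioi] at h3
          linarith
        rw [hempty, Measure.restrict_empty, lintegral_zero_measure]
        exact zero_le
    have step5 : (∑' k : ℤ, ∫⁻ y in Set.Ico ((2:ℝ)^k) (2^k + x) ∩ Set.Ioi (4*x),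
        ENNReal.ofReal (4/(y-x))) ≤ ENNReal.ofReal 4 := by
      have htail := tail_lemma (6*x*2^(-k0)) (1/2) (by norm_num) (by norm_num) k0
      calc (∑' k : ℤ, ∫⁻ y in Set.Ico ((2:ℝ)^k) (2^k + x) ∩ Set.Ioi (4*x),
          ENNReal.ofReal (4/(y-x)))
          ≤ ∑' k : ℤ, ENNReal.ofReal (b k) := ENNReal.tsum_le_tsum step4
        _ = ENNReal.ofReal (∑' k : ℤ, b k) :=
            (ENNReal.ofReal_tsum_of_nonneg hb0 htail.1).symm
        _ ≤ ENNReal.ofReal 4 := by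
            apply ENNReal.ofReal_le_ofReal
            rw [hbdef, htail.2]
            have h3 : 3*x < 2^k0 := (hk0iff k0).mpr le_rfl
            have hzp := two_zpow_pos k0
            have hinv : (2:ℝ)^(-k0) ≤ 1/(3*x) := by
              rw [zpow_neg, ← one_div]
              exact one_div_le_one_div_of_le (by linarith) h3.le
            have : 6*x*2^(-k0) * (1 - 1/2:ℝ)⁻¹ = 12*x*2^(-k0) := by norm_num; ring
            rw [this]
            calc 12*x*(2:ℝ)^(-k0) ≤ 12*x*(1/(3*x)) := by
                  apply mul_le_mul_of_nonneg_left hinv (by linarith)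
              _ = 4 := by field_simp; ring
    calc (∫⁻ y in Set.Ioi (4*x), ENNReal.ofReal (f y)) ≤ _ := step1
      _ = _ := step2
      _ ≤ _ := step3
      _ ≤ ENNReal.ofReal 4 := step5
  calc (∫⁻ y in Set.Ioi (4*x), ENNReal.ofReal (f y)).toReal
      ≤ (ENNReal.ofReal 4).toReal := ENNReal.toReal_mono ENNReal.ofReal_ne_top key
    _ = 4 := ENNReal.toReal_ofReal (by norm_num)
end
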